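/- Let 𝔼̂_j (j ≥ 1) be sublinear expectations on ℋ and X an m-dimensional random vector with sup_j 𝔼̂_j[|X|] =: C < ∞. Let ψ_j, ψ : ℝ^m → ℝ be bounded by K, Lipschitz with common constant L, with ψ_j → ψ pointwise. If additionally 𝔼̂_j[ψ(X)] → ℓ, then 𝔼̂_j[ψ_j(X)] → ℓ. -/
import Mathlib


open scoped NNReal

/-- Bounded Lipschitz real-valued functions on a metric space. -/
def IsBLip {α : Type*} [MetricSpace α] (φ : α → ℝ) : Prop :=
  (∃ K : ℝ, ∀ x, |φ x| ≤ K) ∧ (∃ L : ℝ≥0, LipschitzWith L φ)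

/-- Uniform convergence on closed balls for an equi-Lipschitz sequence converging
pointwise. -/
lemma unif_conv_on_ball {m : ℕ} (ψ : ℕ → EuclideanSpace ℝ (Fin m) → ℝ)
    (ψlim : EuclideanSpace ℝ (Fin m) → ℝ) (L : ℝ≥0)
    (hlip : ∀ j, LipschitzWith L (ψ j)) (hliplim : LipschitzWith L ψlim)
    (hptwise : ∀ x, Filter.Tendsto (fun j => ψ j x) Filter.atTop (nhds (ψlim x)))
    (N ε : ℝ) (hε : 0 < ε) :
    ∀ᶠ j in Filter.atTop,
      ∀ x ∈ Metric.closedBall (0 : EuclideanSpace ℝ (Fin m)) N, |ψ j x - ψlim x| ≤ ε := by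
  have hL0 : (0:ℝ) ≤ (L:ℝ) := L.coe_nonneg
  set δ : ℝ := ε / (4 * ((L:ℝ) + 1)) with hδdef
  have hδ : 0 < δ := by positivity
  obtain ⟨s, hsb, hsfin, hcover⟩ :=
    (isCompact_closedBall (0 : EuclideanSpace ℝ (Fin m)) N).elim_finite_subcover_image
      (fun y (_ : y ∈ Metric.closedBall (0 : EuclideanSpace ℝ (Fin m)) N) =>
        Metric.isOpen_ball (x := y) (ε := δ))
      (fun x hx => Set.mem_iUnion₂.2 ⟨x, hx, Metric.mem_ball_self hδ⟩)
  have hev : ∀ᶠ j in Filter.atTop, ∀ y ∈ s, |ψ j y - ψlim y| ≤ ε / 2 := by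
    rw [Filter.eventually_all_finite hsfin]
    intro y _
    have := (hptwise y).eventually (Metric.closedBall_mem_nhds (ψlim y) (by positivity : (0:ℝ) < ε/2))
    filter_upwards [this] with j hj
    simpa [Real.dist_eq] using hj
  filter_upwards [hev] with j hj x hx
  obtain ⟨y, hys, hxy⟩ := Set.mem_iUnion₂.1 (hcover hx)
  have hdxy : dist x y < δ := Metric.mem_ball.1 hxy
  have h1 : |ψ j x - ψ j y| ≤ (L:ℝ) * δ := by
    have := (hlip j).dist_le_mul x y
    rw [Real.dist_eq] at this
    exact this.trans (by nlinarith)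
  have h3 : |ψlim y - ψlim x| ≤ (L:ℝ) * δ := by
    have := hliplim.dist_le_mul y x
    rw [Real.dist_eq] at this
    exact this.trans (by rw [dist_comm]; nlinarith)
  have h2 : |ψ j y - ψlim y| ≤ ε / 2 := hj y hys
  have hLδ : (L:ℝ) * δ ≤ ε / 4 := by
    have heq : (L:ℝ) * δ = (L:ℝ) * ε / (4 * ((L:ℝ) + 1)) := by rw [hδdef]; ring
    rw [heq, div_le_div_iff₀ (by positivity) (by norm_num)]
    nlinarith
  calc |ψ j x - ψlim x|
      = |(ψ j x - ψ j y) + (ψ j y - ψlim y) + (ψlim y - ψlim x)| := by ring_nf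
    _ ≤ |ψ j x - ψ j y| + |ψ j y - ψlim y| + |ψlim y - ψlim x| := by
        exact (abs_add_le _ _).trans (by gcongr; exact abs_add_le _ _)
    _ ≤ ε / 4 + ε / 2 + ε / 4 := by gcongr <;> linarith
    _ = ε := by ring

/-- Let `E_j` be sublinear expectations with `sup_j E_j[|X|] ≤ C < ∞`,
let `ψ_j, ψ` be bounded by `K`, Lipschitz with common constant `L`, with
`ψ_j → ψ` pointwise. If `E_j[ψ(X)] → ℓ`, then `E_j[ψ_j(X)] → ℓ`. -/
theorem varying_test_function_limit
    {Ω : Type*} {m : ℕ} (H : Set (Ω → ℝ)) (E : ℕ → (Ω → ℝ) → ℝ)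
    (hmono : ∀ (j : ℕ) X Y, X ∈ H → Y ∈ H → (∀ ω, X ω ≤ Y ω) → E j X ≤ E j Y)
    (hconst : ∀ (j : ℕ) (c : ℝ), E j (fun _ : Ω => c) = c)
    (hsub : ∀ (j : ℕ) X Y, X ∈ H → Y ∈ H → E j (X + Y) ≤ E j X + E j Y)
    (hpos : ∀ (j : ℕ) (c : ℝ) X, 0 ≤ c → X ∈ H → E j (c • X) = c * E j X)
    (hH_add : ∀ X Y, X ∈ H → Y ∈ H → X + Y ∈ H)
    (hH_smul : ∀ (c : ℝ) X, X ∈ H → c • X ∈ H)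
    (hH_const : ∀ c : ℝ, (fun _ : Ω => c) ∈ H)
    (X : Ω → EuclideanSpace ℝ (Fin m))
    (hXnorm : (fun ω => ‖X ω‖) ∈ H)
    (hcomp : ∀ φ : EuclideanSpace ℝ (Fin m) → ℝ, IsBLip φ → (fun ω => φ (X ω)) ∈ H)
    (C : ℝ) (hC : ∀ j, E j (fun ω => ‖X ω‖) ≤ C)
    (ψ : ℕ → EuclideanSpace ℝ (Fin m) → ℝ) (ψlim : EuclideanSpace ℝ (Fin m) → ℝ)
    (K : ℝ) (L : ℝ≥0)
    (hbd : ∀ j x, |ψ j x| ≤ K) (hbdlim : ∀ x, |ψlim x| ≤ K)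
    (hlip : ∀ j, LipschitzWith L (ψ j)) (hliplim : LipschitzWith L ψlim)
    (hptwise : ∀ x, Filter.Tendsto (fun j => ψ j x) Filter.atTop (nhds (ψlim x)))
    (ℓ : ℝ)
    (hconv : Filter.Tendsto (fun j => E j (fun ω => ψlim (X ω))) Filter.atTop (nhds ℓ)) :
    Filter.Tendsto (fun j => E j (fun ω => ψ j (X ω))) Filter.atTop (nhds ℓ) := by
  have hK0 : 0 ≤ K := (abs_nonneg _).trans (hbdlim 0)
  have hC0 : 0 ≤ C := by
    have h0 : E 0 (fun _ : Ω => (0:ℝ)) ≤ E 0 (fun ω => ‖X ω‖) :=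
      hmono 0 _ _ (hH_const 0) hXnorm (fun ω => norm_nonneg _)
    rw [hconst] at h0
    linarith [hC 0]
  -- membership facts
  have hmemψ : ∀ j, (fun ω => ψ j (X ω)) ∈ H := fun j =>
    hcomp _ ⟨⟨K, hbd j⟩, ⟨L, hlip j⟩⟩
  have hmemlim : (fun ω => ψlim (X ω)) ∈ H := hcomp _ ⟨⟨K, hbdlim⟩, ⟨L, hliplim⟩⟩
  have hmemdiff : ∀ j, (fun ω => |ψ j (X ω) - ψlim (X ω)|) ∈ H := by
    intro j
    refine hcomp (fun x => |ψ j x - ψlim x|) ⟨⟨2*K, fun x => ?_⟩, ⟨1 * (L + L), ?_⟩⟩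
    · rw [abs_abs]
      calc |ψ j x - ψlim x| ≤ |ψ j x| + |ψlim x| := abs_sub _ _
        _ ≤ 2*K := by linarith [hbd j x, hbdlim x]
    · exact lipschitzWith_one_norm.comp ((hlip j).sub hliplim)
  -- sublinearity: |E f - E g| ≤ E |f - g|
  have key : ∀ j, |E j (fun ω => ψ j (X ω)) - E j (fun ω => ψlim (X ω))| ≤
      E j (fun ω => |ψ j (X ω) - ψlim (X ω)|) := by
    intro j
    set f := (fun ω => ψ j (X ω)) with hf
    set g := (fun ω => ψlim (X ω)) with hg
    set d := (fun ω => |ψ j (X ω) - ψlim (X ω)|) with hd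
    have h1 : E j f ≤ E j g + E j d := by
      refine le_trans (hmono j f (g + d) (hmemψ j) (hH_add _ _ hmemlim (hmemdiff j)) ?_)
        (hsub j g d hmemlim (hmemdiff j))
      intro ω
      have : ψ j (X ω) - ψlim (X ω) ≤ |ψ j (X ω) - ψlim (X ω)| := le_abs_self _
      simp only [hf, hg, hd, Pi.add_apply]
      linarith
    have h2 : E j g ≤ E j f + E j d := by
      refine le_trans (hmono j g (f + d) hmemlim (hH_add _ _ (hmemψ j) (hmemdiff j)) ?_)
        (hsub j f d (hmemψ j) (hmemdiff j))
      intro ω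
      have : ψlim (X ω) - ψ j (X ω) ≤ |ψ j (X ω) - ψlim (X ω)| := by
        rw [abs_sub_comm]; exact le_abs_self _
      simp only [hf, hg, hd, Pi.add_apply]
      linarith
    rw [abs_sub_le_iff]
    constructor <;> linarith
  -- reduce to tendsto of the difference to 0
  suffices hdiff : Filter.Tendsto
      (fun j => E j (fun ω => ψ j (X ω)) - E j (fun ω => ψlim (X ω)))
      Filter.atTop (nhds 0) by
    have h2 := hdiff.add hconv
    rw [zero_add] at h2
    exact h2.congr (fun j => by ring)
  rw [Metric.tendsto_atTop]
  intro ε hε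
  set N : ℝ := max 1 (16 * K * C / ε) with hN
  have hN0 : 0 < N := lt_of_lt_of_le one_pos (le_max_left _ _)
  have hNbound : 2 * K * C / N ≤ ε / 4 := by
    rw [div_le_iff₀ hN0]
    have h1 : 16 * K * C / ε ≤ N := le_max_right _ _
    have h2 : 16 * K * C ≤ ε * N := by
      rw [div_le_iff₀ hε] at h1
      linarith [mul_comm (ε) (N)]
    nlinarith
  have hc0 : (0:ℝ) ≤ 2 * K / N := by positivity
  obtain ⟨j0, hj0⟩ := (Filter.eventually_atTop).1
    (unif_conv_on_ball ψ ψlim L hlip hliplim hptwise N (ε/4) (by positivity))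
  refine ⟨j0, fun j hj => ?_⟩
  rw [Real.dist_eq, sub_zero]
  have hunif := hj0 j hj
  -- pointwise bound for the difference
  have hpt : ∀ ω, |ψ j (X ω) - ψlim (X ω)| ≤ ε/4 + (2 * K / N) * ‖X ω‖ := by
    intro ω
    by_cases hcase : ‖X ω‖ ≤ N
    · have := hunif (X ω) (by simpa [Metric.mem_closedBall, dist_eq_norm] using hcase)
      have hXpos : 0 ≤ (2 * K / N) * ‖X ω‖ := by positivity
      linarith
    · push_neg at hcase
      have h2K : |ψ j (X ω) - ψlim (X ω)| ≤ 2 * K := by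
        calc |ψ j (X ω) - ψlim (X ω)| ≤ |ψ j (X ω)| + |ψlim (X ω)| := abs_sub _ _
          _ ≤ 2 * K := by linarith [hbd j (X ω), hbdlim (X ω)]
      have : 2 * K ≤ (2 * K / N) * ‖X ω‖ := by
        rw [div_mul_eq_mul_div, le_div_iff₀ hN0]
        nlinarith
      linarith
  -- bound the expectation of the difference
  have hEbound : E j (fun ω => |ψ j (X ω) - ψlim (X ω)|) ≤ ε/4 + (2 * K / N) * C := by
    have hmem_b : ((fun _ : Ω => ε/4) + (2 * K / N) • (fun ω => ‖X ω‖)) ∈ H :=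
      hH_add _ _ (hH_const _) (hH_smul _ _ hXnorm)
    have hle : E j (fun ω => |ψ j (X ω) - ψlim (X ω)|) ≤
        E j ((fun _ : Ω => ε/4) + (2 * K / N) • (fun ω => ‖X ω‖)) := by
      refine hmono j _ _ (hmemdiff j) hmem_b ?_
      intro ω
      simpa [Pi.add_apply, Pi.smul_apply, smul_eq_mul] using hpt ω
    refine hle.trans ?_
    refine (hsub j _ _ (hH_const _) (hH_smul _ _ hXnorm)).trans ?_
    rw [hconst, hpos j _ _ hc0 hXnorm]
    have := hC j
    nlinarith
  calc |E j (fun ω => ψ j (X ω)) - E j (fun ω => ψlim (X ω))|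
      ≤ E j (fun ω => |ψ j (X ω) - ψlim (X ω)|) := key j
    _ ≤ ε/4 + (2 * K / N) * C := hEbound
    _ ≤ ε/4 + ε/4 := by
        have : (2 * K / N) * C = 2 * K * C / N := by ring
        rw [this]; linarith
    _ < ε := by linarith
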